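/- Let (v_k)_{k∈ℕ} be a real sequence with v_k = 0 for k < 0, let a_k = Σ_{i=0}^{k} v_i, and suppose w_k = a_k - a_{k-θ_k} for a delay sequence with 0 ≤ θ_k ≤ τ for all k, where τ ≥ 1 is a fixed natural number. Then for every T, Σ_{k=0}^{T} w_k² ≤ τ² Σ_{k=0}^{T} v_k², i.e., the map (v_k) ↦ (w_k) has finite ℓ₂ gain at most τ. -/
import Mathlib


/-- The delay-uncertainty map of protocol P₁ (applied after a discrete integrator)
has finite ℓ₂ gain at most `τ`: if `a_k = Σ_{i=0}^k v_i` (with `a_k = 0` for `k < 0`)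
and `w_k = a_k - a_{k-θ_k}` with delays `0 ≤ θ_k ≤ τ`, then
`Σ_{k=0}^T w_k² ≤ τ² Σ_{k=0}^T v_k²` for every `T`. -/
theorem stmt_4 (τ : ℕ) (hτ : 1 ≤ τ) (v : ℕ → ℝ) (θ : ℕ → ℕ) (hθ : ∀ k, θ k ≤ τ)
    (a : ℤ → ℝ)
    (ha : ∀ k : ℤ, a k = if 0 ≤ k then ∑ i ∈ Finset.range (k.toNat + 1), v i else 0)
    (w : ℕ → ℝ) (hw : ∀ k : ℕ, w k = a k - a ((k : ℤ) - (θ k : ℤ))) :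
    ∀ T : ℕ, ∑ k ∈ Finset.range (T + 1), (w k) ^ 2 ≤
      (τ : ℝ) ^ 2 * ∑ k ∈ Finset.range (T + 1), (v k) ^ 2 := by
  intro T
  -- window representation of w
  have hwin : ∀ k : ℕ, w k = ∑ i ∈ Finset.Icc (k + 1 - θ k) k, v i := by
    intro k
    rw [hw, ha, ha]
    by_cases h : θ k ≤ k
    · have h0 : (0:ℤ) ≤ (k:ℤ) - θ k := by omega
      rw [if_pos (by positivity), if_pos h0]
      have ht : ((k:ℤ) - θ k).toNat = k - θ k := by omega
      rw [ht, Int.toNat_natCast]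
      have h1 : k - θ k + 1 ≤ k + 1 := by omega
      rw [← Finset.sum_Ico_eq_sub _ h1]
      congr 1
      rw [Finset.Ico_add_one_right_eq_Icc]
      congr 1
      omega
    · rw [if_pos (by positivity), if_neg (by omega)]
      have : k + 1 - θ k = 0 := by omega
      rw [this, sub_zero, Int.toNat_natCast]
      rw [Finset.range_eq_Ico, ← Finset.Ico_add_one_right_eq_Icc, Nat.Ico_zero_eq_range,
        Finset.range_eq_Ico]
  -- Cauchy-Schwarz per term
  have hCS : ∀ k : ℕ, (w k) ^ 2 ≤ (τ:ℝ) * ∑ i ∈ Finset.Icc (k + 1 - τ) k, (v i)^2 := by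
    intro k
    rw [hwin k]
    have hsub : Finset.Icc (k + 1 - θ k) k ⊆ Finset.Icc (k + 1 - τ) k := by
      apply Finset.Icc_subset_Icc_left; have := hθ k; omega
    calc (∑ i ∈ Finset.Icc (k + 1 - θ k) k, v i) ^ 2
        ≤ (Finset.Icc (k + 1 - θ k) k).card * ∑ i ∈ Finset.Icc (k + 1 - θ k) k, (v i)^2 :=
          sq_sum_le_card_mul_sum_sq
      _ ≤ (τ:ℝ) * ∑ i ∈ Finset.Icc (k + 1 - τ) k, (v i)^2 := by
          apply mul_le_mul
          · rw [Nat.card_Icc]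
            exact_mod_cast Nat.cast_le.mpr (by have := hθ k; omega : k + 1 - (k + 1 - θ k) ≤ τ)
          · exact Finset.sum_le_sum_of_subset_of_nonneg hsub (fun i _ _ => sq_nonneg _)
          · exact Finset.sum_nonneg (fun i _ => sq_nonneg _)
          · positivity
  -- sum the windows and swap
  have hswap : ∑ k ∈ Finset.range (T + 1), ∑ i ∈ Finset.Icc (k + 1 - τ) k, (v i)^2
      ≤ (τ:ℝ) * ∑ i ∈ Finset.range (T + 1), (v i)^2 := by
    have hin : ∀ k ∈ Finset.range (T + 1),
        ∑ i ∈ Finset.Icc (k + 1 - τ) k, (v i)^2 =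
        ∑ i ∈ Finset.range (T + 1), (if i ∈ Finset.Icc (k + 1 - τ) k then (v i)^2 else 0) := by
      intro k hk
      rw [Finset.sum_ite_mem]
      congr 1
      symm
      rw [Finset.inter_eq_right]
      intro i hi
      simp only [Finset.mem_Icc] at hi
      simp only [Finset.mem_range] at hk ⊢
      omega
    rw [Finset.sum_congr rfl hin, Finset.sum_comm]
    have hterm : ∀ i ∈ Finset.range (T + 1),
        ∑ k ∈ Finset.range (T + 1), (if i ∈ Finset.Icc (k + 1 - τ) k then (v i)^2 else 0)
        ≤ (τ:ℝ) * (v i)^2 := by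
      intro i _
      rw [← Finset.sum_filter, Finset.sum_const, nsmul_eq_mul]
      apply mul_le_mul_of_nonneg_right _ (sq_nonneg _)
      have hsub : (Finset.range (T + 1)).filter (fun k => i ∈ Finset.Icc (k + 1 - τ) k)
          ⊆ Finset.Icc i (i + τ - 1) := by
        intro k hk
        simp only [Finset.mem_filter, Finset.mem_Icc, Finset.mem_range] at hk ⊢
        omega
      have hcard : ((Finset.range (T + 1)).filter
          (fun k => i ∈ Finset.Icc (k + 1 - τ) k)).card ≤ τ :=
        (Finset.card_le_card hsub).trans_eq (by rw [Nat.card_Icc]; omega)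
      exact_mod_cast hcard
    calc ∑ i ∈ Finset.range (T + 1),
          ∑ k ∈ Finset.range (T + 1), (if i ∈ Finset.Icc (k + 1 - τ) k then (v i)^2 else 0)
        ≤ ∑ i ∈ Finset.range (T + 1), (τ:ℝ) * (v i)^2 := Finset.sum_le_sum hterm
      _ = (τ:ℝ) * ∑ i ∈ Finset.range (T + 1), (v i)^2 := by rw [Finset.mul_sum]
  calc ∑ k ∈ Finset.range (T + 1), (w k) ^ 2
      ≤ ∑ k ∈ Finset.range (T + 1), (τ:ℝ) * ∑ i ∈ Finset.Icc (k + 1 - τ) k, (v i)^2 :=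
        Finset.sum_le_sum (fun k _ => hCS k)
    _ = (τ:ℝ) * ∑ k ∈ Finset.range (T + 1), ∑ i ∈ Finset.Icc (k + 1 - τ) k, (v i)^2 := by
        rw [Finset.mul_sum]
    _ ≤ (τ:ℝ) * ((τ:ℝ) * ∑ i ∈ Finset.range (T + 1), (v i)^2) := by
        apply mul_le_mul_of_nonneg_left hswap (by positivity)
    _ = (τ:ℝ)^2 * ∑ i ∈ Finset.range (T + 1), (v i)^2 := by ring
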